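/- Let q ∈ ℂ with q ∉ {0, 1, −1}, and set C11 = 1 + e34 and C22 = diag(q², q, 1, 1) in M₄(ℂ). Then the set of matrices commuting with both C11 and C22 equals the linear span of {e11, e22, e33 + e44, e34}, which is 4-dimensional. -/

import Mathlib

open Matrix

noncomputable def E (i j : Fin 4) : Matrix (Fin 4) (Fin 4) ℂ :=
  Matrix.single i j 1

/-- The centralizer of a matrix, as a submodule of M₄(ℂ). -/
noncomputable def cent (D : Matrix (Fin 4) (Fin 4) ℂ) : Submodule ℂ (Matrix (Fin 4) (Fin 4) ℂ) where
  carrier := {X | X * D = D * X}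
  add_mem' := by
    intro a b ha hb
    simp only [Set.mem_setOf_eq] at *
    rw [add_mul, mul_add, ha, hb]
  zero_mem' := by simp
  smul_mem' := by
    intro c a ha
    simp only [Set.mem_setOf_eq] at *
    rw [smul_mul_assoc, mul_smul_comm, ha]

/-- The joint centralizer of two matrices, as a submodule of M₄(ℂ). -/
noncomputable def cent2 (A B : Matrix (Fin 4) (Fin 4) ℂ) : Submodule ℂ (Matrix (Fin 4) (Fin 4) ℂ) where
  carrier := {X | X * A = A * X ∧ X * B = B * X}
  add_mem' := by
    rintro a b ⟨ha1, ha2⟩ ⟨hb1, hb2⟩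
    constructor <;> rw [add_mul, mul_add]
    · rw [ha1, hb1]
    · rw [ha2, hb2]
  zero_mem' := by simp
  smul_mem' := by
    rintro c a ⟨ha1, ha2⟩
    constructor <;> rw [smul_mul_assoc, mul_smul_comm]
    · rw [ha1]
    · rw [ha2]

lemma entry_zero {x a b : ℂ} (h : x * b = a * x) (hab : a ≠ b) : x = 0 := by
  have h2 : x * (b - a) = 0 := by ring_nf; linear_combination h
  rcases mul_eq_zero.mp h2 with h' | h'
  · exact h'
  · exact absurd (sub_eq_zero.mp h').symm hab

lemma diag_mul_stdBasis (d : Fin 4 → ℂ) (i j : Fin 4) (c : ℂ) :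
    Matrix.diagonal d * Matrix.single i j c = Matrix.single i j (d i * c) := by
  ext a b
  rw [diagonal_mul]
  by_cases ha : i = a
  · subst ha
    by_cases hb : j = b
    · subst hb; simp
    · simp [hb]
  · simp [ha]

lemma stdBasis_mul_diag (d : Fin 4 → ℂ) (i j : Fin 4) (c : ℂ) :
    Matrix.single i j c * Matrix.diagonal d = Matrix.single i j (c * d j) := by
  ext a b
  rw [mul_diagonal]
  by_cases ha : i = a
  · subst ha
    by_cases hb : j = b
    · subst hb; simp
    · simp [hb]
  · simp [ha]

set_option maxHeartbeats 1000000 in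
lemma basis_range : ({E 0 0, E 1 1, E 2 2 + E 3 3, E 2 3} : Set (Matrix (Fin 4) (Fin 4) ℂ)) =
    Set.range ![E 0 0, E 1 1, E 2 2 + E 3 3, E 2 3] := by
  ext x
  simp only [Set.mem_insert_iff, Set.mem_singleton_iff, Set.mem_range]
  constructor
  · rintro (rfl | rfl | rfl | rfl)
    exacts [⟨0, rfl⟩, ⟨1, rfl⟩, ⟨2, rfl⟩, ⟨3, rfl⟩]
  · rintro ⟨i, rfl⟩
    fin_cases i <;> simp

set_option maxHeartbeats 1000000 in
lemma basis_li : LinearIndependent ℂ ![E 0 0, E 1 1, E 2 2 + E 3 3, E 2 3] := by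
  rw [Fintype.linearIndependent_iff]
  intro g hg
  simp only [Fin.sum_univ_four, Matrix.cons_val_zero, Matrix.cons_val_one, Matrix.head_cons,
    Matrix.cons_val_two, Matrix.tail_cons, Matrix.cons_val_three] at hg
  have h0 := congrFun (congrFun hg 0) 0
  have h1 := congrFun (congrFun hg 1) 1
  have h2 := congrFun (congrFun hg 2) 2
  have h3 := congrFun (congrFun hg 2) 3
  simp [E, Matrix.single, Matrix.add_apply, Matrix.smul_apply] at h0
  simp [E, Matrix.single, Matrix.add_apply, Matrix.smul_apply] at h1
  simp [E, Matrix.single, Matrix.add_apply, Matrix.smul_apply] at h2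
  simp [E, Matrix.single, Matrix.add_apply, Matrix.smul_apply] at h3
  intro i
  fin_cases i <;> assumption

set_option maxHeartbeats 2000000 in
theorem case717_invariants (q : ℂ) (hq0 : q ≠ 0) (hq1 : q ≠ 1) (hqm1 : q ≠ -1)
    (C11 C22 : Matrix (Fin 4) (Fin 4) ℂ)
    (h11 : C11 = 1 + E 2 3)
    (h22 : C22 = Matrix.diagonal ![q ^ 2, q, 1, 1]) :
    (cent2 C11 C22 : Set (Matrix (Fin 4) (Fin 4) ℂ)) =
      (Submodule.span ℂ {E 0 0, E 1 1, E 2 2 + E 3 3, E 2 3} :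
        Submodule ℂ (Matrix (Fin 4) (Fin 4) ℂ)) ∧
      Module.finrank ℂ (cent2 C11 C22) = 4 := by
  subst h11 h22
  have hq2q : q ^ 2 ≠ q := by
    intro h; exact hq1 (mul_left_cancel₀ hq0 (by linear_combination h : q * q = q * 1))
  have hq21 : q ^ 2 ≠ 1 := by
    intro h
    have : (q - 1) * (q + 1) = 0 := by linear_combination h
    rcases mul_eq_zero.mp this with h' | h'
    · exact hq1 (by linear_combination h')
    · exact hqm1 (by linear_combination h')
  have hset : (cent2 (1 + E 2 3) (Matrix.diagonal ![q ^ 2, q, 1, 1]) :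
      Set (Matrix (Fin 4) (Fin 4) ℂ)) =
      (Submodule.span ℂ {E 0 0, E 1 1, E 2 2 + E 3 3, E 2 3} :
        Submodule ℂ (Matrix (Fin 4) (Fin 4) ℂ)) := by
    ext X
    simp only [SetLike.mem_coe]
    constructor
    · rintro ⟨h1, h2⟩
      have hd : ∀ i j, X i j * (![q ^ 2, q, 1, 1]) j = (![q ^ 2, q, 1, 1]) i * X i j := by
        intro i j
        have := congrFun (congrFun h2 i) j
        simpa [mul_diagonal, diagonal_mul] using this
      have e01 : X 0 1 = 0 := entry_zero (by simpa using hd 0 1) hq2q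
      have e02 : X 0 2 = 0 := entry_zero (by simpa using hd 0 2) hq21
      have e03 : X 0 3 = 0 := entry_zero (by simpa using hd 0 3) hq21
      have e10 : X 1 0 = 0 := entry_zero (by simpa using hd 1 0) hq2q.symm
      have e12 : X 1 2 = 0 := entry_zero (by simpa using hd 1 2) hq1
      have e13 : X 1 3 = 0 := entry_zero (by simpa using hd 1 3) hq1
      have e20 : X 2 0 = 0 := entry_zero (by simpa using hd 2 0) hq21.symm
      have e21 : X 2 1 = 0 := entry_zero (by simpa using hd 2 1) hq1.symm
      have e30 : X 3 0 = 0 := entry_zero (by simpa using hd 3 0) hq21.symm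
      have e31 : X 3 1 = 0 := entry_zero (by simpa using hd 3 1) hq1.symm
      have h1' : X * E 2 3 = E 2 3 * X := by
        have h := h1
        rw [mul_add, add_mul, mul_one, one_mul] at h
        exact add_left_cancel h
      have e32 : X 3 2 = 0 := by
        have := congrFun (congrFun h1' 3) 3
        simpa [E, mul_apply, Matrix.single, Fin.sum_univ_four] using this
      have e2233 : X 2 2 = X 3 3 := by
        have := congrFun (congrFun h1' 2) 3
        simpa [E, mul_apply, Matrix.single, Fin.sum_univ_four] using this
      have hXeq : X = X 0 0 • E 0 0 + X 1 1 • E 1 1 + X 2 2 • (E 2 2 + E 3 3)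
          + X 2 3 • E 2 3 := by
        ext i j
        fin_cases i <;> fin_cases j <;>
          simp_all [E, Matrix.single, Matrix.add_apply, Matrix.smul_apply]
      rw [hXeq]
      refine add_mem (add_mem (add_mem ?_ ?_) ?_) ?_ <;>
        exact Submodule.smul_mem _ _ (Submodule.subset_span (by simp))
    · intro hX
      have hle : Submodule.span ℂ ({E 0 0, E 1 1, E 2 2 + E 3 3, E 2 3} :
          Set (Matrix (Fin 4) (Fin 4) ℂ)) ≤
          cent2 (1 + E 2 3) (Matrix.diagonal ![q ^ 2, q, 1, 1]) := by
        rw [Submodule.span_le]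
        rintro x hx
        simp only [Set.mem_insert_iff, Set.mem_singleton_iff] at hx
        rcases hx with rfl | rfl | rfl | rfl <;>
          constructor <;>
          (simp [E, mul_add, add_mul, diag_mul_stdBasis, stdBasis_mul_diag, mul_comm]; try abel)
      exact hle hX
  refine ⟨hset, ?_⟩
  have hmod : cent2 (1 + E 2 3) (Matrix.diagonal ![q ^ 2, q, 1, 1]) =
      Submodule.span ℂ {E 0 0, E 1 1, E 2 2 + E 3 3, E 2 3} := SetLike.coe_injective hset
  rw [hmod]
  rw [basis_range, finrank_span_eq_card basis_li, Fintype.card_fin]
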